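/- Suppose the sign vector (ε₁,…,εₙ) ∈ {1,−1}ⁿ of the real Cayley–Dickson algebra 𝔸ₙ contains at least one εᵢ = −1. Then the pure trace of 𝔸ₙ equals one: the sum over all nonempty α ⊆ {1,…,n} of e_α · e_α equals 1 (the algebra unit). -/

import Mathlib

noncomputable section

/-- The real Cayley–Dickson algebra carrier: `CD 0 = ℝ`, `CD (n+1) = CD n × CD n`. -/
def CD : ℕ → Type
  | 0 => ℝ
  | n + 1 => CD n × CD n

instance CD.instAddCommGroup : (n : ℕ) → AddCommGroup (CD n)
  | 0 => inferInstanceAs (AddCommGroup ℝ)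
  | n + 1 =>
    letI := CD.instAddCommGroup n
    inferInstanceAs (AddCommGroup (CD n × CD n))

instance CD.instModule : (n : ℕ) → Module ℝ (CD n)
  | 0 => inferInstanceAs (Module ℝ ℝ)
  | n + 1 =>
    letI := CD.instModule n
    inferInstanceAs (Module ℝ (CD n × CD n))

/-- The unit of the Cayley–Dickson algebra. -/
def CD.one : (n : ℕ) → CD n
  | 0 => (1 : ℝ)
  | n + 1 => (CD.one n, 0)

/-- Conjugation: `(a, b)* = (a*, -b)`, identity on `ℝ`. -/
def CD.conj : (n : ℕ) → CD n → CD n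
  | 0, a => a
  | n + 1, x => (CD.conj n x.1, -x.2)

/-- Cayley–Dickson multiplication with sign vector `ε`:
`(a,b)·(c,d) = (a·c − ε (n+1) • (d*·b), d·a + b·c*)`. -/
def CD.mul (ε : ℕ → ℝ) : (n : ℕ) → CD n → CD n → CD n
  | 0, a, c => (show ℝ from a) * (show ℝ from c)
  | n + 1, x, y =>
    (CD.mul ε n x.1 y.1 - ε (n + 1) • CD.mul ε n (CD.conj n y.2) x.2,
     CD.mul ε n y.2 x.1 + CD.mul ε n x.2 (CD.conj n y.1))

/-- The standard basis element `e α` of `CD n`, for `α ⊆ {1,…,n}`. -/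
def CD.basis : (n : ℕ) → Finset ℕ → CD n
  | 0, _ => (1 : ℝ)
  | n + 1, α =>
    if n + 1 ∈ α then ((0 : CD n), CD.basis n (α.erase (n + 1)))
    else (CD.basis n α, (0 : CD n))

/-- `α` indexes a pure basis element of `CD n`. -/
def CD.IsPure (n : ℕ) (α : Finset ℕ) : Prop :=
  α.Nonempty ∧ α ⊆ Finset.Icc 1 n

/-- The associator `[x,y,z] = (x·y)·z − x·(y·z)`. -/
def CD.assoc (ε : ℕ → ℝ) (n : ℕ) (x y z : CD n) : CD n :=
  CD.mul ε n (CD.mul ε n x y) z - CD.mul ε n x (CD.mul ε n y z)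

/-- A triad: indices of three pairwise distinct pure basis elements `b, c, d`
with `d ≠ ±(b·c)` (all signs `εᵢ = 1`). -/
def CD.IsTriad (n : ℕ) (α β γ : Finset ℕ) : Prop :=
  CD.IsPure n α ∧ CD.IsPure n β ∧ CD.IsPure n γ ∧
  α ≠ β ∧ α ≠ γ ∧ β ≠ γ ∧
  CD.basis n γ ≠ CD.mul (fun _ => 1) n (CD.basis n α) (CD.basis n β) ∧
  CD.basis n γ ≠ -CD.mul (fun _ => 1) n (CD.basis n α) (CD.basis n β)

/-- Multiplication with all signs `εᵢ = 1`. -/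
abbrev CD.mul1 (n : ℕ) : CD n → CD n → CD n := CD.mul (fun _ => 1) n

/-- Associator with all signs `εᵢ = 1`. -/
abbrev CD.assoc1 (n : ℕ) : CD n → CD n → CD n → CD n := CD.assoc (fun _ => 1) n

lemma CD.add_def (n : ℕ) (x y : CD (n+1)) : x + y = (x.1 + y.1, x.2 + y.2) := rfl
lemma CD.neg_def (n : ℕ) (x : CD (n+1)) : -x = (-x.1, -x.2) := rfl
lemma CD.sub_def (n : ℕ) (x y : CD (n+1)) : x - y = (x.1 - y.1, x.2 - y.2) := rfl
lemma CD.smul_def (n : ℕ) (r : ℝ) (x : CD (n+1)) : r • x = (r • x.1, r • x.2) := rfl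
lemma CD.zero_def (n : ℕ) : (0 : CD (n+1)) = ((0 : CD n), (0 : CD n)) := rfl

lemma CD.conj_zero : ∀ n : ℕ, CD.conj n 0 = 0
  | 0 => rfl
  | n + 1 => by
    show (CD.conj n (0:CD n), -(0:CD n)) = _
    rw [CD.conj_zero n, CD.zero_def, neg_zero]

mutual
lemma CD.mul_zero' (ε : ℕ → ℝ) : ∀ n (x : CD n), CD.mul ε n x 0 = 0
  | 0, x => mul_zero (show ℝ from x)
  | n + 1, x => by
    show (CD.mul ε n x.1 0 - ε (n+1) • CD.mul ε n (CD.conj n (0:CD n)) x.2,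
      CD.mul ε n (0:CD n) x.1 + CD.mul ε n x.2 (CD.conj n (0:CD n))) = _
    rw [CD.conj_zero, CD.mul_zero' ε n, CD.zero_mul' ε n, CD.zero_mul' ε n, CD.mul_zero' ε n]
    simp [CD.zero_def]

lemma CD.zero_mul' (ε : ℕ → ℝ) : ∀ n (x : CD n), CD.mul ε n 0 x = 0
  | 0, x => zero_mul (show ℝ from x)
  | n + 1, x => by
    show (CD.mul ε n (0:CD n) x.1 - ε (n+1) • CD.mul ε n (CD.conj n x.2) (0:CD n),
      CD.mul ε n x.2 (0:CD n) + CD.mul ε n (0:CD n) (CD.conj n x.1)) = _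
    rw [CD.mul_zero' , CD.zero_mul' ε n, CD.zero_mul' ε n, CD.mul_zero']
    simp [CD.zero_def]
end


lemma CD.conj_smul : ∀ (n : ℕ) (r : ℝ) (x : CD n), CD.conj n (r • x) = r • CD.conj n x
  | 0, r, x => rfl
  | n + 1, r, x => by
    show (CD.conj n (r • x.1), -(r • x.2)) = (r • CD.conj n x.1, r • -x.2)
    rw [CD.conj_smul n, smul_neg]

lemma CD.conj_neg : ∀ (n : ℕ) (x : CD n), CD.conj n (-x) = -CD.conj n x
  | 0, x => rfl
  | n + 1, x => by
    show (CD.conj n (-x.1), -(-x.2)) = (-CD.conj n x.1, - -x.2)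
    rw [CD.conj_neg n]

mutual
lemma CD.smul_mul (ε : ℕ → ℝ) : ∀ (n : ℕ) (r : ℝ) (x y : CD n),
    CD.mul ε n (r • x) y = r • CD.mul ε n x y
  | 0, r, x, y => smul_mul_assoc r (show ℝ from x) (show ℝ from y)
  | n + 1, r, x, y => by
    show (CD.mul ε n (r • x.1) y.1 - ε (n+1) • CD.mul ε n (CD.conj n y.2) (r • x.2),
      CD.mul ε n y.2 (r • x.1) + CD.mul ε n (r • x.2) (CD.conj n y.1)) =
      (r • (CD.mul ε n x.1 y.1 - ε (n+1) • CD.mul ε n (CD.conj n y.2) x.2),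
      r • (CD.mul ε n y.2 x.1 + CD.mul ε n x.2 (CD.conj n y.1)))
    rw [CD.smul_mul ε n, CD.mul_smul ε n, CD.mul_smul ε n, CD.smul_mul ε n,
      smul_sub, smul_add, smul_comm (ε (n+1)) r]

lemma CD.mul_smul (ε : ℕ → ℝ) : ∀ (n : ℕ) (r : ℝ) (x y : CD n),
    CD.mul ε n x (r • y) = r • CD.mul ε n x y
  | 0, r, x, y => mul_smul_comm r (show ℝ from x) (show ℝ from y)
  | n + 1, r, x, y => by
    show (CD.mul ε n x.1 (r • y.1) - ε (n+1) • CD.mul ε n (CD.conj n (r • y.2)) x.2,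
      CD.mul ε n (r • y.2) x.1 + CD.mul ε n x.2 (CD.conj n (r • y.1))) =
      (r • (CD.mul ε n x.1 y.1 - ε (n+1) • CD.mul ε n (CD.conj n y.2) x.2),
      r • (CD.mul ε n y.2 x.1 + CD.mul ε n x.2 (CD.conj n y.1)))
    rw [CD.conj_smul, CD.conj_smul, CD.mul_smul ε n, CD.smul_mul ε n, CD.smul_mul ε n,
      CD.mul_smul ε n, smul_sub, smul_add, smul_comm (ε (n+1)) r]
end

lemma CD.neg_mul' (ε : ℕ → ℝ) (n : ℕ) (x y : CD n) :
    CD.mul ε n (-x) y = -CD.mul ε n x y := by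
  rw [← neg_one_smul ℝ x, CD.smul_mul, neg_one_smul]

lemma CD.mul_neg' (ε : ℕ → ℝ) (n : ℕ) (x y : CD n) :
    CD.mul ε n x (-y) = -CD.mul ε n x y := by
  rw [← neg_one_smul ℝ y, CD.mul_smul, neg_one_smul]

lemma CD.conj_one : ∀ n : ℕ, CD.conj n (CD.one n) = CD.one n
  | 0 => rfl
  | n + 1 => by
    show (CD.conj n (CD.one n), -(0:CD n)) = (CD.one n, (0:CD n))
    rw [CD.conj_one n, neg_zero]

lemma CD.one_mul_one (ε : ℕ → ℝ) : ∀ n : ℕ, CD.mul ε n (CD.one n) (CD.one n) = CD.one n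
  | 0 => show (1:ℝ) * 1 = 1 from mul_one 1
  | n + 1 => by
    show (CD.mul ε n (CD.one n) (CD.one n) - ε (n+1) • CD.mul ε n (CD.conj n 0) 0,
      CD.mul ε n 0 (CD.one n) + CD.mul ε n 0 (CD.conj n (CD.one n))) = (CD.one n, (0:CD n))
    rw [CD.one_mul_one ε n, CD.mul_zero', CD.zero_mul', CD.zero_mul', smul_zero, sub_zero, add_zero]

lemma CD.basis_empty : ∀ n : ℕ, CD.basis n ∅ = CD.one n
  | 0 => rfl
  | n + 1 => by
    show (if n + 1 ∈ (∅:Finset ℕ) then ((0:CD n), CD.basis n ((∅:Finset ℕ).erase (n+1)))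
      else (CD.basis n ∅, (0:CD n))) = (CD.one n, (0:CD n))
    rw [if_neg (Finset.notMem_empty _), CD.basis_empty n]

lemma CD.basis_succ_mem (n : ℕ) (α : Finset ℕ) (h : n + 1 ∈ α) :
    CD.basis (n+1) α = ((0 : CD n), CD.basis n (α.erase (n+1))) := by
  show (if n + 1 ∈ α then ((0:CD n), CD.basis n (α.erase (n+1)))
      else (CD.basis n α, (0:CD n))) = _
  rw [if_pos h]

lemma CD.basis_succ_not_mem (n : ℕ) (α : Finset ℕ) (h : n + 1 ∉ α) :
    CD.basis (n+1) α = (CD.basis n α, (0 : CD n)) := by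
  show (if n + 1 ∈ α then ((0:CD n), CD.basis n (α.erase (n+1)))
      else (CD.basis n α, (0:CD n))) = _
  rw [if_neg h]

lemma CD.conj_basis : ∀ (n : ℕ) (α : Finset ℕ), α ⊆ Finset.Icc 1 n → α.Nonempty →
    CD.conj n (CD.basis n α) = -CD.basis n α
  | 0, α, hs, hne => absurd (hs hne.choose_spec) (by simp)
  | n + 1, α, hs, hne => by
    by_cases h : n + 1 ∈ α
    · rw [CD.basis_succ_mem n α h]
      show (CD.conj n (0:CD n), -(CD.basis n (α.erase (n+1)))) = _
      rw [CD.conj_zero]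
      show _ = (-(0:CD n), -(CD.basis n (α.erase (n+1))))
      rw [neg_zero]
    · have hs' : α ⊆ Finset.Icc 1 n := fun i hi => by
        have h1 := hs hi
        have h2 : i ≠ n + 1 := fun e => h (e ▸ hi)
        simp only [Finset.mem_Icc] at h1 ⊢
        omega
      rw [CD.basis_succ_not_mem n α h]
      show (CD.conj n (CD.basis n α), -(0:CD n)) = _
      rw [CD.conj_basis n α hs' hne]
      show _ = (-(CD.basis n α), -(0:CD n))
      rw [neg_zero]

lemma CD.sq_basis (ε : ℕ → ℝ) : ∀ (n : ℕ) (α : Finset ℕ), α ⊆ Finset.Icc 1 n → α.Nonempty →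
    CD.mul ε n (CD.basis n α) (CD.basis n α) = (-(∏ i ∈ α, ε i)) • CD.one n
  | 0, α, hs, hne => absurd (hs hne.choose_spec) (by simp)
  | n + 1, α, hs, hne => by
    by_cases h : n + 1 ∈ α
    · rw [CD.basis_succ_mem n α h]
      set b := CD.basis n (α.erase (n+1)) with hb
      show (CD.mul ε n 0 0 - ε (n+1) • CD.mul ε n (CD.conj n b) b,
        CD.mul ε n b 0 + CD.mul ε n b (CD.conj n 0)) =
        ((-(∏ i ∈ α, ε i)) • CD.one n, (-(∏ i ∈ α, ε i)) • (0:CD n))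
      rw [CD.zero_mul', CD.conj_zero, CD.mul_zero', add_zero, zero_sub, smul_zero]
      have hprod : ∏ i ∈ α, ε i = ε (n+1) * ∏ i ∈ α.erase (n+1), ε i :=
        (Finset.mul_prod_erase α ε h).symm
      have he : α.erase (n+1) ⊆ Finset.Icc 1 n := fun i hi => by
        have h1 := hs (Finset.mem_of_mem_erase hi)
        have h2 := Finset.ne_of_mem_erase hi
        simp only [Finset.mem_Icc] at h1 ⊢
        omega
      by_cases hα : (α.erase (n+1)).Nonempty
      · rw [CD.conj_basis n _ he hα, CD.neg_mul', CD.sq_basis ε n _ he hα]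
        rw [hprod]
        rw [smul_neg, neg_neg, smul_smul, mul_neg]
      · have : α.erase (n+1) = ∅ := Finset.not_nonempty_iff_eq_empty.mp hα
        rw [hb, this, CD.basis_empty, CD.conj_one, CD.one_mul_one, hprod, this,
          Finset.prod_empty, mul_one, neg_smul]
    · have hs' : α ⊆ Finset.Icc 1 n := fun i hi => by
        have h1 := hs hi
        have h2 : i ≠ n + 1 := fun e => h (e ▸ hi)
        simp only [Finset.mem_Icc] at h1 ⊢
        omega
      rw [CD.basis_succ_not_mem n α h]
      set b := CD.basis n α with hb
      show (CD.mul ε n b b - ε (n+1) • CD.mul ε n (CD.conj n 0) 0,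
        CD.mul ε n 0 b + CD.mul ε n 0 (CD.conj n b)) =
        ((-(∏ i ∈ α, ε i)) • CD.one n, (-(∏ i ∈ α, ε i)) • (0:CD n))
      rw [CD.conj_zero, CD.mul_zero', CD.zero_mul', CD.zero_mul', smul_zero, sub_zero, add_zero,
        smul_zero, CD.sq_basis ε n α hs' hne]

/-- (Trace theorem.) If some `εᵢ = −1`, the sum of the squares
of the `2ⁿ − 1` pure basis elements of `𝔸ₙ` equals `1`. -/
theorem stmt17 (n : ℕ) (ε : ℕ → ℝ)
    (hε : ∀ i ∈ Finset.Icc 1 n, ε i = 1 ∨ ε i = -1)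
    (hneg : ∃ i ∈ Finset.Icc 1 n, ε i = -1) :
    ∑ α ∈ (Finset.Icc 1 n).powerset.filter (fun α => α.Nonempty),
        CD.mul ε n (CD.basis n α) (CD.basis n α) = CD.one n := by
  rw [Finset.sum_congr rfl (fun α hα => by
    simp only [Finset.mem_filter, Finset.mem_powerset] at hα
    exact CD.sq_basis ε n α hα.1 hα.2)]
  rw [← Finset.sum_smul]
  have key : ∑ α ∈ (Finset.Icc 1 n).powerset, ∏ i ∈ α, ε i = 0 := by
    have := Finset.prod_add ε (fun _ => (1:ℝ)) (Finset.Icc 1 n)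
    simp only [Finset.prod_const_one, mul_one] at this
    rw [← this]
    obtain ⟨i, hi, hεi⟩ := hneg
    exact Finset.prod_eq_zero hi (by rw [hεi]; ring)
  have split := Finset.sum_filter_add_sum_filter_not (Finset.Icc 1 n).powerset
    (fun α => α.Nonempty) (fun α => ∏ i ∈ α, ε i)
  have hnot : (Finset.Icc 1 n).powerset.filter (fun α => ¬α.Nonempty) = {∅} := by
    ext β
    simp [Finset.not_nonempty_iff_eq_empty]
    intro h; subst h; simp
  rw [hnot, Finset.sum_singleton, Finset.prod_empty, key] at split
  have : ∑ α ∈ (Finset.Icc 1 n).powerset.filter (fun α => α.Nonempty), ∏ i ∈ α, ε i = -1 := by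
    linarith
  rw [Finset.sum_neg_distrib, this, neg_neg, one_smul]
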